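/- (Shortcutting an Eulerian multigraph to a Hamiltonian path.) Let c be a metric on V and let L be a finite multiset of edges of the complete graph on V such that the multigraph (V, L) is connected, the vertices s and t have odd degree in (V, L), and every other vertex has even degree in (V, L). Then there exists a Hamiltonian path from s to t in the complete graph on V whose cost is at most ∑_{e ∈ L} c(e) (counted with multiplicity). -/

import Mathlib

open Finset

namespace TSPPath

noncomputable section
open scoped Classical

/-- Edge set of the complete graph on `Fin n`: all unordered pairs of distinct vertices. -/
def Edges (n : ℕ) : Finset (Sym2 (Fin n)) := Finset.univ.filter (fun e => ¬ e.IsDiag)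

/-- `cutSet n S` is `δ(S)`: the edges with exactly one endpoint in `S`. -/
def cutSet (n : ℕ) (S : Finset (Fin n)) : Finset (Sym2 (Fin n)) :=
  (Edges n).filter (fun e => ∃ u v : Fin n, e = s(u, v) ∧ u ∈ S ∧ v ∉ S)

/-- `inSet n S` is `E(S)`: the edges with both endpoints in `S`. -/
def inSet (n : ℕ) (S : Finset (Fin n)) : Finset (Sym2 (Fin n)) :=
  (Edges n).filter (fun e => ∀ v ∈ e, v ∈ S)

/-- Degree of a vertex in an edge set. -/
def deg (n : ℕ) (H : Finset (Sym2 (Fin n))) (v : Fin n) : ℕ :=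
  (H.filter (fun e => v ∈ e)).card

/-- Degree of a vertex in an edge multiset (counting multiplicity). -/
def mdeg (n : ℕ) (L : Multiset (Sym2 (Fin n))) (v : Fin n) : ℕ :=
  (L.filter (fun e => v ∈ e)).card

/-- Feasibility for the path-variant Held–Karp relaxation with endpoints `s, t`. -/
def HKPathFeasible (n : ℕ) (s t : Fin n) (x : Sym2 (Fin n) → ℝ) : Prop :=
  (∀ e, 0 ≤ x e) ∧
  (∑ e ∈ cutSet n {s}, x e = 1) ∧
  (∑ e ∈ cutSet n {t}, x e = 1) ∧
  (∀ v : Fin n, v ≠ s → v ≠ t → ∑ e ∈ cutSet n {v}, x e = 2) ∧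
  (∀ S : Finset (Fin n), S.Nonempty → S ≠ Finset.univ →
      ((s ∈ S ∧ t ∉ S) ∨ (s ∉ S ∧ t ∈ S)) → 1 ≤ ∑ e ∈ cutSet n S, x e) ∧
  (∀ S : Finset (Fin n), S.Nonempty → S ≠ Finset.univ →
      ¬((s ∈ S ∧ t ∉ S) ∨ (s ∉ S ∧ t ∈ S)) → 2 ≤ ∑ e ∈ cutSet n S, x e)

/-- `c` is a metric: nonnegative, symmetric, vanishing on the diagonal, triangle inequality. -/
def IsMetric (n : ℕ) (c : Fin n → Fin n → ℝ) : Prop :=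
  (∀ u v, 0 ≤ c u v) ∧ (∀ u v, c u v = c v u) ∧ (∀ u, c u u = 0) ∧
  (∀ u v w, c u w ≤ c u v + c v w)

/-- Cost of an unordered edge (defined by symmetrization, which agrees with `c u v`
whenever `c` is symmetric). -/
def ecost (n : ℕ) (c : Fin n → Fin n → ℝ) (e : Sym2 (Fin n)) : ℝ :=
  Sym2.lift ⟨fun u v => (c u v + c v u) / 2, by intro u v; ring⟩ e

/-- `c(x) = ∑_{e ∈ E} x_e c(e)`. -/
def xcost (n : ℕ) (c : Fin n → Fin n → ℝ) (x : Sym2 (Fin n) → ℝ) : ℝ :=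
  ∑ e ∈ Edges n, x e * ecost n c e

/-- `c(F) = ∑_{e ∈ F} c(e)` for an edge set `F`. -/
def fcost (n : ℕ) (c : Fin n → Fin n → ℝ) (F : Finset (Sym2 (Fin n))) : ℝ :=
  ∑ e ∈ F, ecost n c e

/-- `H` is (the edge set of) a spanning tree of the complete graph on `Fin n`. -/
def IsSpanningTree (n : ℕ) (H : Finset (Sym2 (Fin n))) : Prop :=
  H ⊆ Edges n ∧ (SimpleGraph.fromEdgeSet (H : Set (Sym2 (Fin n)))).Connected ∧
    H.card = n - 1

/-- The wrong-parity set of an edge set `H`: internal vertices of odd degree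
together with the endpoints of even degree. -/
def wrongParity (n : ℕ) (s t : Fin n) (H : Finset (Sym2 (Fin n))) : Finset (Fin n) :=
  Finset.univ.filter (fun v =>
    if v = s ∨ v = t then Even (deg n H v) else Odd (deg n H v))

/-- `M` is a perfect matching on the vertex set `T`: vertex-disjoint edges covering
exactly the vertices of `T`. -/
def IsPerfectMatchingOn (n : ℕ) (T : Finset (Fin n)) (M : Finset (Sym2 (Fin n))) : Prop :=
  M ⊆ Edges n ∧ (∀ v ∈ T, deg n M v = 1) ∧ (∀ v : Fin n, v ∉ T → deg n M v = 0)

/-- `J` is a `T`-join: exactly the vertices of `T` have odd degree in `J`. -/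
def IsTJoin (n : ℕ) (T : Finset (Fin n)) (J : Finset (Sym2 (Fin n))) : Prop :=
  J ⊆ Edges n ∧ ∀ v : Fin n, Odd (deg n J v) ↔ v ∈ T

/-- There is a Hamiltonian path from `s` to `t` in the complete graph on `Fin n`
of cost (w.r.t. the metric `c`) at most `B`. -/
def ExistsHamPath (n : ℕ) (s t : Fin n) (c : Fin n → Fin n → ℝ) (B : ℝ) : Prop :=
  ∃ p : (⊤ : SimpleGraph (Fin n)).Walk s t,
    p.IsHamiltonian ∧ (p.edges.map (ecost n c)).sum ≤ B

/-- Connectivity of the multigraph `(V, L)` (equivalently, of its support graph,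
which must span all of `Fin n`). -/
def MConnected (n : ℕ) (L : Multiset (Sym2 (Fin n))) : Prop :=
  (SimpleGraph.fromEdgeSet {e | e ∈ L}).Connected

/-- The multiset of edges traversed by the walk given by a vertex list `w`. -/
def walkEdges (n : ℕ) (w : List (Fin n)) : Multiset (Sym2 (Fin n)) :=
  ((w.zip w.tail).map (fun p => s(p.1, p.2)) : List (Sym2 (Fin n)))

/-- `w` is an Eulerian trail from `s` to `t` of the edge multiset `L`: a walk from `s`
to `t` whose multiset of traversed edges is exactly `L` (with multiplicity). -/
def IsEulerianTrail (n : ℕ) (L : Multiset (Sym2 (Fin n))) (s t : Fin n)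
    (w : List (Fin n)) : Prop :=
  w.head? = some s ∧ w.getLast? = some t ∧ walkEdges n w = L

variable {n : ℕ}

lemma walkEdges_nil : walkEdges n [] = 0 := rfl
lemma walkEdges_single (a : Fin n) : walkEdges n [a] = 0 := rfl
lemma walkEdges_cons_cons (a b : Fin n) (l : List (Fin n)) :
    walkEdges n (a::b::l) = s(a,b) ::ₘ walkEdges n (b::l) := rfl

lemma mdeg_zero (x : Fin n) : mdeg n 0 x = 0 := rfl

lemma mdeg_add (A B : Multiset (Sym2 (Fin n))) (x : Fin n) :
    mdeg n (A+B) x = mdeg n A x + mdeg n B x := by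
  simp [mdeg, Multiset.filter_add]

lemma mdeg_cons (e : Sym2 (Fin n)) (A : Multiset (Sym2 (Fin n))) (x : Fin n) :
    mdeg n (e ::ₘ A) x = (if x ∈ e then 1 else 0) + mdeg n A x := by
  by_cases h : x ∈ e <;> simp [mdeg, Multiset.filter_cons, h] <;> omega

lemma mdeg_le {A B : Multiset (Sym2 (Fin n))} (h : A ≤ B) (x : Fin n) :
    mdeg n A x ≤ mdeg n B x :=
  Multiset.card_le_card (Multiset.filter_le_filter _ h)

lemma mdeg_sub {A B : Multiset (Sym2 (Fin n))} (h : B ≤ A) (x : Fin n) :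
    mdeg n (A - B) x = mdeg n A x - mdeg n B x := by
  rw [mdeg, Multiset.filter_sub, Multiset.card_sub (Multiset.filter_le_filter _ h)]; rfl

lemma mdeg_eq_zero_iff (A : Multiset (Sym2 (Fin n))) (x : Fin n) :
    mdeg n A x = 0 ↔ ∀ e ∈ A, x ∉ e := by
  simp [mdeg, Multiset.card_eq_zero, Multiset.filter_eq_nil]


lemma walkEdges_splice (y : Fin n) (B : List (Fin n)) :
    ∀ A : List (Fin n), walkEdges n (A ++ y :: B) = walkEdges n (A ++ [y]) + walkEdges n (y :: B)
  | [] => by simp [walkEdges_single]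
  | [a] => by simp [walkEdges_cons_cons, walkEdges_single]
  | (a :: a' :: A') => by
      have ih := walkEdges_splice y B (a' :: A')
      simp only [List.cons_append, walkEdges_cons_cons] at *
      rw [ih, Multiset.cons_add]

lemma walkEdges_reverse : ∀ (l : List (Fin n)), walkEdges n l.reverse = walkEdges n l
  | [] => rfl
  | [a] => rfl
  | (a :: b :: l) => by
      have ih := walkEdges_reverse (b :: l)
      have h1 : (a :: b :: l).reverse = (b::l).reverse ++ [a] := by simp
      have h2 : (b :: l).reverse = l.reverse ++ [b] := by simp
      rw [h1, h2, List.append_assoc]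
      show walkEdges n (l.reverse ++ b :: [a]) = _
      rw [walkEdges_splice b [a] l.reverse]
      rw [← h2, ih, walkEdges_cons_cons, walkEdges_cons_cons, walkEdges_single]
      rw [Sym2.eq_swap]
      rw [add_comm]
      simp

lemma mem_of_mem_walkEdges : ∀ (l : List (Fin n)) (e : Sym2 (Fin n)), e ∈ walkEdges n l →
    ∀ x ∈ e, x ∈ l
  | [], e, he => by simp [walkEdges_nil] at he
  | [a], e, he => by simp [walkEdges_single] at he
  | (a :: b :: l), e, he => by
      rw [walkEdges_cons_cons, Multiset.mem_cons] at he
      intro x hx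
      rcases he with he | he
      · subst he
        rcases Sym2.mem_iff.mp hx with h | h
        · exact h ▸ List.mem_cons_self
        · exact h ▸ List.mem_cons_of_mem _ (List.mem_cons_self)
      · exact List.mem_cons_of_mem _ (mem_of_mem_walkEdges (b::l) e he x hx)

lemma walkEdges_mem_decomp : ∀ (l : List (Fin n)) (e : Sym2 (Fin n)), e ∈ walkEdges n l →
    ∃ (p q : List (Fin n)) (a b : Fin n), l = p ++ a :: b :: q ∧ e = s(a,b)
  | [], e, he => by simp [walkEdges_nil] at he
  | [a], e, he => by simp [walkEdges_single] at he
  | (a :: b :: l), e, he => by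
      rw [walkEdges_cons_cons, Multiset.mem_cons] at he
      rcases he with he | he
      · exact ⟨[], l, a, b, rfl, he⟩
      · obtain ⟨p, q, a', b', h1, h2⟩ := walkEdges_mem_decomp (b::l) e he
        exact ⟨a :: p, q, a', b', by rw [List.cons_append, h1], h2⟩

lemma parity_walkEdges : ∀ (l : List (Fin n)) (a b : Fin n), l.head? = some a →
    l.getLast? = some b → (∀ e ∈ walkEdges n l, ¬ e.IsDiag) →
    ∀ x, (Even (mdeg n (walkEdges n l) x) ↔ ((x = a) ↔ (x = b)))
  | [], a, b, ha, hb, hnd => by simp at ha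
  | [c], a, b, ha, hb, hnd => by
      simp at ha hb; subst ha; subst hb
      intro x; simp [walkEdges_single, mdeg_zero]
  | (c :: d :: l), a, b, ha, hb, hnd => by
      simp at ha; subst ha
      have hb' : (d :: l).getLast? = some b := by
        rwa [List.getLast?_cons_cons] at hb
      have hnd' : ∀ e ∈ walkEdges n (d :: l), ¬ e.IsDiag := by
        intro e he; exact hnd e (by rw [walkEdges_cons_cons]; exact Multiset.mem_cons_of_mem he)
      have hcd : c ≠ d := by
        have := hnd s(c,d) (by rw [walkEdges_cons_cons]; exact Multiset.mem_cons_self _ _)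
        simpa [Sym2.isDiag_iff_proj_eq] using this
      have ih := parity_walkEdges (d :: l) d b rfl hb' hnd'
      intro x
      rw [walkEdges_cons_cons, mdeg_cons]
      by_cases h1 : x = c
      · subst h1
        simp only [Sym2.mem_iff, true_or, if_pos rfl, eq_self_iff_true, true_iff]
        rw [Nat.even_add, ih x]
        by_cases h2 : x = b
        · subst h2; simp [hcd]
        · simp [h2, hcd]
      · by_cases h2 : x = d
        · subst h2
          simp only [Sym2.mem_iff, or_true, if_pos rfl]
          rw [Nat.even_add, ih x]
          by_cases h3 : x = b
          · subst h3; simp [h1, Ne.symm hcd]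
          · simp [h3, h1]
        · have : x ∉ s(c,d) := by simp [Sym2.mem_iff, h1, h2]
          rw [if_neg this, zero_add, ih x]
          by_cases h3 : x = b
          · subst h3; simp [h1, h2]
          · simp [h3, h1, h2]


lemma exists_stuck_trail : ∀ (k : ℕ) (L : Multiset (Sym2 (Fin n))), L.card ≤ k → ∀ v : Fin n,
    ∃ (w : List (Fin n)) (u : Fin n), w.head? = some v ∧ w.getLast? = some u ∧
      walkEdges n w ≤ L ∧ mdeg n (L - walkEdges n w) u = 0 := by
  intro k
  induction k with
  | zero =>
    intro L hL v
    have : L = 0 := Multiset.card_eq_zero.mp (Nat.le_zero.mp hL)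
    subst this
    exact ⟨[v], v, rfl, rfl, by simp [walkEdges_single], by simp [walkEdges_single, mdeg_zero]⟩
  | succ k ih =>
    intro L hL v
    by_cases h : mdeg n L v = 0
    · exact ⟨[v], v, rfl, rfl, by simp [walkEdges_single], by simpa [walkEdges_single] using h⟩
    · obtain ⟨e, heL, hve⟩ : ∃ e ∈ L, v ∈ e := by
        by_contra hc; push_neg at hc
        exact h ((mdeg_eq_zero_iff L v).mpr hc)
      obtain ⟨x, rfl⟩ := Sym2.mem_iff_exists.mp hve
      have hcard : (L.erase s(v,x)).card ≤ k := by
        have := Multiset.card_erase_lt_of_mem heL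
        omega
      obtain ⟨w', u, hw1, hw2, hw3, hw4⟩ := ih (L.erase s(v,x)) hcard x
      match w', hw1 with
      | (hd :: tl), hw1 =>
        have hhd : hd = x := by simpa using hw1
        subst hhd
        refine ⟨v :: hd :: tl, u, rfl, ?_, ?_, ?_⟩
        · rwa [List.getLast?_cons_cons]
        · rw [walkEdges_cons_cons]
          calc s(v,hd) ::ₘ walkEdges n (hd :: tl) ≤ s(v,hd) ::ₘ L.erase s(v,hd) :=
                Multiset.cons_le_cons _ hw3
            _ = L := Multiset.cons_erase heL
        · rw [walkEdges_cons_cons, Multiset.sub_cons]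
          exact hw4

lemma reach_aux (L0 L' : Multiset (Sym2 (Fin n))) (u : List (Fin n))
    (hcov : ∀ e ∈ L0, e ∈ L' ∨ ∀ z ∈ e, z ∈ u) :
    ∀ {a x : Fin n}, (SimpleGraph.fromEdgeSet {e | e ∈ L0}).Walk a x →
      (∃ y ∈ u, (SimpleGraph.fromEdgeSet {e | e ∈ L'}).Reachable y a) →
      ∃ y ∈ u, (SimpleGraph.fromEdgeSet {e | e ∈ L'}).Reachable y x := by
  intro a x p
  induction p with
  | nil => exact id
  | @cons a b x hadj p ihp =>
    intro hex
    apply ihp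
    rw [SimpleGraph.fromEdgeSet_adj] at hadj
    obtain ⟨hmem, hne⟩ := hadj
    rcases hcov _ hmem with hL' | hu
    · obtain ⟨y, hy, hr⟩ := hex
      exact ⟨y, hy, hr.trans (SimpleGraph.Adj.reachable
        ((SimpleGraph.fromEdgeSet_adj _).mpr ⟨hL', hne⟩))⟩
    · exact ⟨b, hu b (Sym2.mem_mk_right a b), SimpleGraph.Reachable.refl b⟩

lemma merge (L : Multiset (Sym2 (Fin n))) (hnd : ∀ e ∈ L, ¬ e.IsDiag) (v : Fin n)
    (hreach : ∀ x, (SimpleGraph.fromEdgeSet {e | e ∈ L}).Reachable v x) :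
    ∀ (m : ℕ) (u : List (Fin n)), u.head? = some v → u.getLast? = some v →
    walkEdges n u ≤ L → (∀ x, Even (mdeg n (L - walkEdges n u) x)) →
    (L - walkEdges n u).card ≤ m →
    ∃ w, w.head? = some v ∧ w.getLast? = some v ∧ walkEdges n w = L := by
  intro m
  induction m with
  | zero =>
    intro u h1 h2 h3 _ h5
    refine ⟨u, h1, h2, ?_⟩
    have : L - walkEdges n u = 0 := Multiset.card_eq_zero.mp (Nat.le_zero.mp h5)
    have hle : L ≤ walkEdges n u := tsub_eq_zero_iff_le.mp this
    exact le_antisymm h3 hle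
  | succ m ih =>
    intro u h1 h2 h3 h4 h5
    set W := walkEdges n u with hW
    set L' := L - W with hL'
    by_cases h0 : L' = 0
    · refine ⟨u, h1, h2, le_antisymm h3 (tsub_eq_zero_iff_le.mp h0)⟩
    · obtain ⟨e', he'⟩ := Multiset.exists_mem_of_ne_zero h0
      have hLsplit : W + L' = L := add_tsub_cancel_of_le h3
      have hvu : v ∈ u := List.mem_of_mem_head? (by rw [h1]; rfl)
      -- find y ∈ u reachable (in L') to an endpoint of e'
      have hx : e'.out.1 ∈ e' := Sym2.out_fst_mem e'
      obtain ⟨y, hyu, hyr⟩ : ∃ y ∈ u, (SimpleGraph.fromEdgeSet {e | e ∈ L'}).Reachable y e'.out.1 := by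
        refine reach_aux L L' u ?_ (hreach e'.out.1).some ⟨v, hvu, SimpleGraph.Reachable.refl v⟩
        intro e he
        rw [← hLsplit, Multiset.mem_add] at he
        rcases he with he | he
        · exact Or.inr (mem_of_mem_walkEdges u e he)
        · exact Or.inl he
      -- y has positive degree in L'
      have hdegy : mdeg n L' y ≠ 0 := by
        intro hc
        have hno := (mdeg_eq_zero_iff L' y).mp hc
        obtain ⟨p⟩ := hyr
        cases p with
        | nil => exact hno e' he' hx
        | cons hadj p' =>
          rw [SimpleGraph.fromEdgeSet_adj] at hadj
          exact hno _ hadj.1 (Sym2.mem_mk_left _ _)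
      -- stuck trail from y in L'
      obtain ⟨wy, u', hy1, hy2, hy3, hy4⟩ := exists_stuck_trail L'.card L' le_rfl y
      set Wy := walkEdges n wy with hWy
      have hndy : ∀ e ∈ Wy, ¬ e.IsDiag := by
        intro e he
        exact hnd e (Multiset.subset_of_le (le_trans hy3 (tsub_le_self)) he)
      have hdegsplit : ∀ x, mdeg n L' x = mdeg n Wy x + mdeg n (L' - Wy) x := by
        intro x
        conv_lhs => rw [← add_tsub_cancel_of_le hy3]
        exact mdeg_add _ _ x
      have hu'y : u' = y := by
        have heven : Even (mdeg n Wy u') := by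
          have := hdegsplit u'
          rw [hy4, add_zero] at this
          rw [← this]
          exact h4 u'
        have hp := parity_walkEdges wy y u' hy1 hy2 hndy u'
        rw [hp] at heven
        simpa using heven
      subst hu'y
      have hWyne : Wy ≠ 0 := by
        intro hc
        apply hdegy
        rw [hc, tsub_zero] at hy4
        exact hy4
      obtain ⟨p, q, hpq⟩ := List.append_of_mem hyu
      obtain ⟨r, rfl⟩ : ∃ r, wy = u' :: r := by
        cases wy with
        | nil => simp at hy1
        | cons hd rr =>
          have : hd = u' := by simpa using hy1
          exact ⟨rr, by rw [this]⟩
      obtain ⟨r', z, hrz⟩ : ∃ r' z, u' :: r = r' ++ [z] := by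
        obtain ⟨rr, b, hb⟩ := (List.eq_nil_or_concat (u' :: r)).resolve_left (by simp)
        exact ⟨rr, b, by simpa [List.concat_eq_append] using hb⟩
      have hz : z = u' := by
        rw [hrz] at hy2
        simpa using hy2
      rw [hz] at hrz
      clear hz
      set u₂ := p ++ (u' :: r) ++ q with hu₂
      have hkey : walkEdges n u₂ = W + Wy := by
        have e1 : u₂ = p ++ u' :: (r ++ q) := by simp [hu₂]
        have e2 : u' :: (r ++ q) = r' ++ u' :: q := by
          rw [← List.cons_append, hrz, List.append_assoc]
          rfl
        rw [e1, walkEdges_splice u' (r ++ q) p, e2, walkEdges_splice u' q r', ← hrz]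
        have e3 : walkEdges n u = walkEdges n (p ++ [u']) + walkEdges n (u' :: q) := by
          rw [hpq, walkEdges_splice u' q p]
        rw [hW, e3, hWy]
        ac_rfl
      have hh : u₂.head? = some v := by
        cases p with
        | nil =>
          have : u' = v := by
            rw [hpq] at h1
            simpa using h1
          simp [hu₂, this]
        | cons a p' =>
          have : a = v := by
            rw [hpq] at h1
            simpa using h1
          simp [hu₂, this]
      have hlast : u₂.getLast? = some v := by
        by_cases hq : q = []
        · subst hq
          have h2' : u' = v := by
            rw [hpq] at h2
            rw [List.getLast?_append_of_ne_nil p (by simp)] at h2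
            simpa using h2
          rw [hu₂, List.append_nil, List.getLast?_append_of_ne_nil p (by simp)]
          rw [hrz, List.getLast?_concat]
          rw [h2']
        · rw [hu₂, List.getLast?_append_of_ne_nil _ hq, ← List.getLast?_append_of_ne_nil (p ++ [u']) hq]
          have heq : p ++ [u'] ++ q = u := by
            rw [List.append_assoc, List.singleton_append, ← hpq]
          rw [heq]
          exact h2
      have hle2 : walkEdges n u₂ ≤ L := by
        rw [hkey]
        exact (le_tsub_iff_left h3).mp hy3
      have hrem : L - walkEdges n u₂ = L' - Wy := by
        rw [hkey, tsub_add_eq_tsub_tsub]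
      have hWyeven : ∀ x, Even (mdeg n Wy x) := by
        intro x
        have := parity_walkEdges (u' :: r) u' u' hy1 hy2 hndy x
        simpa using this
      have heven' : ∀ x, Even (mdeg n (L - walkEdges n u₂) x) := by
        intro x
        rw [hrem, mdeg_sub hy3]
        exact Even.tsub (h4 x) (hWyeven x)
      have hcard' : (L - walkEdges n u₂).card ≤ m := by
        rw [hrem, Multiset.card_sub hy3]
        have h6 : 1 ≤ Wy.card := Multiset.card_pos.mpr hWyne
        omega
      exact ih u₂ hh hlast hle2 heven' hcard'

lemma remove_edge (w : List (Fin n)) (v a b : Fin n) (h1 : w.head? = some v)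
    (h2 : w.getLast? = some v) (p q : List (Fin n)) (hsplit : w = p ++ a :: b :: q) :
    ∃ w', w'.head? = some b ∧ w'.getLast? = some a ∧
      s(a,b) ::ₘ walkEdges n w' = walkEdges n w := by
  cases p with
  | nil =>
    subst hsplit
    have hva : v = a := by simpa using h1.symm
    subst hva
    refine ⟨b :: q, rfl, ?_, (walkEdges_cons_cons _ _ _).symm⟩
    rw [List.nil_append] at h2
    rwa [List.getLast?_cons_cons] at h2
  | cons ph pt =>
    have hphv : ph = v := by
      rw [hsplit] at h1
      simpa using h1
    subst hphv
    subst hsplit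
    refine ⟨b :: (q ++ pt ++ [a]), rfl, ?_, ?_⟩
    · have : b :: (q ++ pt ++ [a]) = (b :: (q ++ pt)) ++ [a] := by simp
      rw [this, List.getLast?_concat]
    · have hq0 : (a :: b :: q).getLast? = some ph := by
        rw [← h2, List.getLast?_append_of_ne_nil (ph :: pt) (by simp)]
      obtain ⟨q1, z, hq1⟩ : ∃ q1 z, a :: b :: q = q1 ++ [z] := by
        obtain ⟨rr, bb, hb⟩ := (List.eq_nil_or_concat (a :: b :: q)).resolve_left (by simp)
        exact ⟨rr, bb, by simpa [List.concat_eq_append] using hb⟩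
      have hzp : z = ph := by
        rw [hq1, List.getLast?_concat] at hq0
        simpa using hq0
      rw [hzp] at hq1
      have lhs_eq : a :: b :: (q ++ pt ++ [a]) = q1 ++ ph :: (pt ++ [a]) := by
        have : a :: b :: (q ++ pt ++ [a]) = (a :: b :: q) ++ (pt ++ [a]) := by simp
        rw [this, hq1, List.append_assoc, List.singleton_append]
      rw [← walkEdges_cons_cons, lhs_eq, walkEdges_splice ph (pt ++ [a]) q1, ← hq1]
      have rhs_eq : (ph :: pt) ++ a :: b :: q = (ph :: pt) ++ [a] ++ (b :: q) := by simp
      have : walkEdges n ((ph :: pt) ++ a :: b :: q)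
          = walkEdges n ((ph :: pt) ++ [a]) + walkEdges n (a :: b :: q) :=
        walkEdges_splice a (b :: q) (ph :: pt)
      rw [this]
      have : walkEdges n (ph :: (pt ++ [a])) = walkEdges n ((ph :: pt) ++ [a]) := by
        simp
      rw [this]
      ac_rfl

lemma euler_trail (L : Multiset (Sym2 (Fin n))) (hnd : ∀ e ∈ L, ¬ e.IsDiag)
    (s t : Fin n) (hst : s ≠ t)
    (hconn : (SimpleGraph.fromEdgeSet {e | e ∈ L}).Connected)
    (hs : Odd (mdeg n L s)) (ht : Odd (mdeg n L t))
    (hother : ∀ v : Fin n, v ≠ s → v ≠ t → Even (mdeg n L v)) :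
    ∃ w : List (Fin n), w.head? = some s ∧ w.getLast? = some t ∧ walkEdges n w = L := by
  set Lp := s(s,t) ::ₘ L with hLp
  have hndp : ∀ e ∈ Lp, ¬ e.IsDiag := by
    intro e he
    rcases Multiset.mem_cons.mp he with rfl | he
    · simpa [Sym2.isDiag_iff_proj_eq] using hst
    · exact hnd e he
  have hreach : ∀ x, (SimpleGraph.fromEdgeSet {e | e ∈ Lp}).Reachable s x := by
    intro x
    refine (hconn.preconnected s x).mono ?_
    exact SimpleGraph.fromEdgeSet_mono (fun e he => Multiset.mem_cons_of_mem he)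
  have heven : ∀ x, Even (mdeg n Lp x) := by
    intro x
    rw [hLp, mdeg_cons]
    by_cases hxs : x = s
    · subst hxs
      rw [if_pos (Sym2.mem_mk_left _ _)]
      rcases hs with ⟨k, hk⟩
      exact ⟨k+1, by omega⟩
    · by_cases hxt : x = t
      · subst hxt
        rw [if_pos (Sym2.mem_mk_right _ _)]
        rcases ht with ⟨k, hk⟩
        exact ⟨k+1, by omega⟩
      · rw [if_neg (by simp [Sym2.mem_iff, hxs, hxt])]
        rcases hother x hxs hxt with ⟨k, hk⟩
        exact ⟨k, by omega⟩
  obtain ⟨w, hw1, hw2, hw3⟩ := merge Lp hndp s hreach Lp.card [s] rfl rfl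
    (Multiset.zero_le _) (by simpa [walkEdges_single] using heven) (by simp [walkEdges_single])
  have hmem : s(s,t) ∈ walkEdges n w := by rw [hw3]; exact Multiset.mem_cons_self _ _
  obtain ⟨p, q, a, b, hsplit, hab⟩ := walkEdges_mem_decomp w s(s,t) hmem
  obtain ⟨w', hw'1, hw'2, hw'3⟩ := remove_edge w s a b hw1 hw2 p q hsplit
  have hL : walkEdges n w' = L := by
    have h' : s(a,b) ::ₘ walkEdges n w' = s(a,b) ::ₘ L := by rw [hw'3, hw3, hLp, ← hab]
    exact (Multiset.cons_inj_right _).mp h'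
  rcases Sym2.eq_iff.mp hab with ⟨ha', hb'⟩ | ⟨ha', hb'⟩
  · -- s = a, t = b : w' goes from b = t to a = s; reverse it
    refine ⟨w'.reverse, ?_, ?_, by rwa [walkEdges_reverse]⟩
    · rw [List.head?_reverse, hw'2, ← ha']
    · rw [List.getLast?_reverse, hw'1, ← hb']
  · -- s = b, t = a : w' goes from b = s to a = t
    refine ⟨w', ?_, ?_, hL⟩
    · rw [hw'1, ← ha']
    · rw [hw'2, ← hb']





def pcost (n : ℕ) (c : Fin n → Fin n → ℝ) (l : List (Fin n)) : ℝ :=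
  (((l.zip l.tail).map (fun p => s(p.1, p.2))).map (ecost n c)).sum

variable {c : Fin n → Fin n → ℝ}

lemma pcost_nil : pcost n c [] = 0 := by simp [pcost]

lemma ecost_mk (hc : IsMetric n c) (a b : Fin n) : ecost n c s(a,b) = c a b := by
  simp only [ecost, Sym2.lift_mk]
  rw [hc.2.1 b a]
  ring

lemma ecost_nonneg (hc : IsMetric n c) (e : Sym2 (Fin n)) : 0 ≤ ecost n c e := by
  induction e using Sym2.ind with
  | _ a b => rw [ecost_mk hc]; exact hc.1 a b

lemma pcost_single (a : Fin n) : pcost n c [a] = 0 := by simp [pcost]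

lemma pcost_cons_cons (a b : Fin n) (l : List (Fin n)) :
    pcost n c (a :: b :: l) = ecost n c s(a,b) + pcost n c (b :: l) := by
  simp [pcost]

lemma pcost_eq (l : List (Fin n)) :
    pcost n c l = ((walkEdges n l).map (ecost n c)).sum := rfl

lemma pcost_nonneg (hc : IsMetric n c) : ∀ l : List (Fin n), 0 ≤ pcost n c l
  | [] => le_refl 0
  | [a] => by simp [pcost_single]
  | (a :: b :: l) => by
      rw [pcost_cons_cons]
      exact add_nonneg (ecost_nonneg hc _) (pcost_nonneg hc (b :: l))

lemma pcost_triangle_step (hc : IsMetric n c) (a b : Fin n) (l : List (Fin n)) :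
    pcost n c (a :: l) ≤ ecost n c s(a,b) + pcost n c (b :: l) := by
  cases l with
  | nil =>
    simp [pcost_single]
    exact ecost_nonneg hc _
  | cons x l' =>
    rw [pcost_cons_cons, pcost_cons_cons]
    have htri : ecost n c s(a,x) ≤ ecost n c s(a,b) + ecost n c s(b,x) := by
      rw [ecost_mk hc, ecost_mk hc, ecost_mk hc]
      exact hc.2.2.2 a b x
    linarith

lemma pcost_cons_le (hc : IsMetric n c) {u w : List (Fin n)} (h : u.Sublist w) :
    ∀ a, pcost n c (a :: u) ≤ pcost n c (a :: w) := by
  induction h with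
  | slnil => intro a; exact le_refl _
  | @cons u w b h ih =>
    intro a
    exact le_trans (ih a) (pcost_triangle_step hc a b w)
  | @cons_cons u w b h ih =>
    intro a
    rw [pcost_cons_cons, pcost_cons_cons]
    exact add_le_add_right (ih b) _

lemma pcost_le_of_sublist (hc : IsMetric n c) {u w : List (Fin n)} (h : u.Sublist w) :
    pcost n c u ≤ pcost n c w := by
  induction h with
  | slnil => exact le_refl _
  | @cons u w b h ih =>
    refine le_trans ih ?_
    cases w with
    | nil => simp [pcost_single, pcost_nil]
    | cons x w' =>
      rw [pcost_cons_cons]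
      have := ecost_nonneg hc (s(b,x))
      linarith
  | @cons_cons u w b h ih =>
    exact pcost_cons_le hc h b

lemma getLast?_dedup : ∀ (l : List (Fin n)), l ≠ [] → l.dedup.getLast? = l.getLast?
  | [], h => absurd rfl h
  | (a :: l), _ => by
      by_cases hal : a ∈ l
      · have hlne : l ≠ [] := List.ne_nil_of_mem hal
        rw [List.dedup_cons_of_mem hal, getLast?_dedup l hlne]
        rw [show a :: l = [a] ++ l from rfl, List.getLast?_append_of_ne_nil [a] hlne]
      · rw [List.dedup_cons_of_notMem hal]
        cases hl : l with
        | nil => simp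
        | cons x l' =>
          have hlne : l ≠ [] := by simp [hl]
          have hd : l.dedup ≠ [] := by
            intro hdn
            have h2 := getLast?_dedup l hlne
            rw [hdn, hl] at h2
            have h3 : (x :: l').getLast? = none := h2.symm
            rw [List.getLast?_eq_none_iff] at h3
            simp at h3
          rw [← hl]
          rw [show a :: l.dedup = [a] ++ l.dedup from rfl,
            List.getLast?_append_of_ne_nil [a] hd, getLast?_dedup l hlne]
          rw [show a :: l = [a] ++ l from rfl, List.getLast?_append_of_ne_nil [a] hlne]

lemma exists_walk : ∀ (l : List (Fin n)), l.Chain' (· ≠ ·) → ∀ (a b : Fin n),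
    l.head? = some a → l.getLast? = some b →
    ∃ p : (⊤ : SimpleGraph (Fin n)).Walk a b, p.support = l ∧
      p.edges = (l.zip l.tail).map (fun p => s(p.1, p.2))
  | [], _, a, b, ha, _ => by simp at ha
  | [x], _, a, b, ha, hb => by
      have hxa : x = a := by simpa using ha
      have hxb : x = b := by simpa using hb
      subst hxa; subst hxb
      exact ⟨SimpleGraph.Walk.nil, by simp, by simp⟩
  | (x :: y :: l), hch, a, b, ha, hb => by
      have hxa : x = a := by simpa using ha
      subst hxa
      have hb' : (y :: l).getLast? = some b := by rwa [List.getLast?_cons_cons] at hb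
      have hch' : (y :: l).Chain' (· ≠ ·) := hch.tail
      have hxy : x ≠ y := List.isChain_cons_cons.mp hch |>.1
      obtain ⟨p', hp1, hp2⟩ := exists_walk (y :: l) hch' y b rfl hb'
      refine ⟨SimpleGraph.Walk.cons (by simpa using hxy) p', ?_, ?_⟩
      · rw [SimpleGraph.Walk.support_cons, hp1]
      · rw [SimpleGraph.Walk.edges_cons, hp2]
        rfl

/-- (Shortcutting an Eulerian multigraph to a Hamiltonian path.)
If the multigraph `(V, L)` is connected, `s` and `t` have odd degree and all other
vertices even degree, then there is a Hamiltonian `s`–`t` path of cost at most the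
total cost of `L` (with multiplicity), for any metric `c`. -/
theorem shortcut_eulerian (n : ℕ) (hn : 2 ≤ n) (s t : Fin n) (hst : s ≠ t)
    (c : Fin n → Fin n → ℝ) (hc : IsMetric n c)
    (L : Multiset (Sym2 (Fin n))) (hLd : ∀ e ∈ L, ¬ e.IsDiag)
    (hconn : MConnected n L)
    (hs : Odd (mdeg n L s)) (ht : Odd (mdeg n L t))
    (hother : ∀ v : Fin n, v ≠ s → v ≠ t → Even (mdeg n L v)) :
    ExistsHamPath n s t c (L.map (ecost n c)).sum := by
  have hconn' : (SimpleGraph.fromEdgeSet {e | e ∈ L}).Connected := hconn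
  obtain ⟨w, hw1, hw2, hw3⟩ := euler_trail L hLd s t hst hconn' hs ht hother
  have hall : ∀ v : Fin n, v ∈ w := by
    intro v
    by_cases hv : v = s
    · subst hv
      exact List.mem_of_mem_head? (by rw [hw1]; rfl)
    · obtain ⟨pw⟩ := hconn'.preconnected v s
      cases pw with
      | nil => exact absurd rfl hv
      | cons hadj _ =>
        rw [SimpleGraph.fromEdgeSet_adj] at hadj
        exact mem_of_mem_walkEdges w _ (hw3.symm ▸ hadj.1) v (Sym2.mem_mk_left _ _)
  set d := (w.filter (fun x => x ≠ s)).dedup with hd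
  set u := s :: d with hu
  have hsub : d.Sublist w := (List.dedup_sublist _).trans List.filter_sublist
  have hnodup : u.Nodup := by
    rw [hu]
    refine List.nodup_cons.mpr ⟨?_, List.nodup_dedup _⟩
    intro hsd
    have := List.of_mem_filter (List.mem_dedup.mp hsd)
    simp at this
  have hmemall : ∀ v : Fin n, v ∈ u := by
    intro v
    by_cases hv : v = s
    · rw [hv, hu]; exact List.mem_cons_self
    · rw [hu]
      exact List.mem_cons_of_mem _
        (List.mem_dedup.mpr (List.mem_filter.mpr ⟨hall v, by simpa using hv⟩))
  obtain ⟨w0, z, hw0⟩ : ∃ w0 z, w = w0 ++ [z] := by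
    obtain ⟨rr, bb, hb⟩ := (List.eq_nil_or_concat w).resolve_left
      (by intro h; rw [h] at hw1; simp at hw1)
    exact ⟨rr, bb, by simpa [List.concat_eq_append] using hb⟩
  have hzt : z = t := by rw [hw0, List.getLast?_concat] at hw2; simpa using hw2
  rw [hzt] at hw0
  have hfillast : (w.filter (fun x => x ≠ s)).getLast? = some t := by
    rw [hw0, List.filter_append]
    have h1 : List.filter (fun x => x ≠ s) [t] = [t] := by simp [hst.symm]
    rw [h1, List.getLast?_concat]
  have hflne : (w.filter (fun x => x ≠ s)) ≠ [] := by
    intro h0; rw [h0] at hfillast; simp at hfillast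
  have hdlast : d.getLast? = some t := by
    rw [hd, getLast?_dedup _ hflne, hfillast]
  have hdne : d ≠ [] := by intro h0; rw [h0] at hdlast; simp at hdlast
  have hulast : u.getLast? = some t := by
    rw [hu, show s :: d = [s] ++ d from rfl, List.getLast?_append_of_ne_nil [s] hdne, hdlast]
  have hchain : u.Chain' (fun a b => a ≠ b) := List.Pairwise.isChain hnodup
  obtain ⟨p, hps, hpe⟩ := exists_walk u hchain s t rfl hulast
  refine ⟨p, ?_, ?_⟩
  · intro v
    rw [hps]
    exact List.count_eq_one_of_mem hnodup (hmemall v)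
  · have hcost1 : (p.edges.map (ecost n c)).sum = pcost n c u := by rw [hpe]; rfl
    have hcost2 : pcost n c u ≤ pcost n c (s :: w) := pcost_cons_le hc hsub s
    have hcost3 : pcost n c (s :: w) = pcost n c w := by
      cases w with
      | nil => simp at hw1
      | cons hd' tl =>
        have : hd' = s := by simpa using hw1
        subst this
        rw [pcost_cons_cons, ecost_mk hc, hc.2.2.1, zero_add]
    have hcost4 : pcost n c w = (L.map (ecost n c)).sum := by
      rw [pcost_eq, hw3]
    rw [hcost1]
    rw [← hcost4, ← hcost3]
    exact hcost2

end
end TSPPath
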